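/- The seven-qubit Steane code is the smallest single-error-correcting CSS code: for every n ≤ 6 there do not exist subspaces C_X, C_Z ⊆ (ZMod 2)^n such that (i) a·b = 0 for all a ∈ C_X, b ∈ C_Z, (ii) dim C_X + dim C_Z ≤ n − 1 (the code encodes at least one logical qubit), and (iii) every vector of Hamming weight ≤ 2 in C_Z^⊥ lies in C_X and every vector of Hamming weight ≤ 2 in C_X^⊥ lies in C_Z. -/

import Mathlib

open Finset Module


/-- Hamming weight of a binary vector. -/
def hammingWt {n : ℕ} (v : Fin n → ZMod 2) : ℕ :=
  (Finset.univ.filter fun i => v i ≠ 0).card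

/-- Standard bilinear form `a·b = ∑ i, a i * b i` on `(ZMod 2)^n`. -/
def bform {n : ℕ} (a b : Fin n → ZMod 2) : ZMod 2 :=
  ∑ i, a i * b i

lemma bform_comm {n : ℕ} (a b : Fin n → ZMod 2) : bform a b = bform b a := by
  simp [bform, mul_comm]

lemma bform_add_left {n : ℕ} (a a' b : Fin n → ZMod 2) :
    bform (a + a') b = bform a b + bform a' b := by
  simp [bform, add_mul, Finset.sum_add_distrib]

lemma bform_sum_right {n : ℕ} (a : Fin n → ZMod 2) {ι : Type*} (t : Finset ι)
    (f : ι → (Fin n → ZMod 2)) :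
    bform a (∑ x ∈ t, f x) = ∑ x ∈ t, bform a (f x) := by
  simp only [bform, Finset.sum_apply, Finset.mul_sum]
  exact Finset.sum_comm

lemma bform_smul_right {n : ℕ} (a b : Fin n → ZMod 2) (c : ZMod 2) :
    bform a (c • b) = c * bform a b := by
  simp [bform, Finset.mul_sum, mul_left_comm]

lemma single_eq {n : ℕ} (i : Fin n) :
    (Pi.single i 1 : Fin n → ZMod 2) = fun j => if i = j then 1 else 0 := by
  funext j
  rw [Pi.single_apply]
  exact if_congr eq_comm rfl rfl

lemma bform_single_left {n : ℕ} (i : Fin n) (c : Fin n → ZMod 2) :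
    bform (Pi.single i 1) c = c i := by
  simp [bform, Pi.single_apply, ite_mul]

lemma hammingWt_le_two {n : ℕ} (v : Fin n → ZMod 2) (i j : Fin n)
    (h : ∀ k, v k ≠ 0 → k = i ∨ k = j) : hammingWt v ≤ 2 := by
  have hsub : (Finset.univ.filter fun k => v k ≠ 0) ⊆ {i, j} := by
    intro k hk
    simp only [Finset.mem_filter] at hk
    simp only [Finset.mem_insert, Finset.mem_singleton]
    exact h k hk.2
  calc (Finset.univ.filter fun k => v k ≠ 0).card ≤ ({i, j} : Finset (Fin n)).card :=
        Finset.card_le_card hsub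
    _ ≤ 2 := by
        refine le_trans (Finset.card_insert_le _ _) ?_
        simp

set_option maxHeartbeats 1000000 in
lemma core {n : ℕ} (CX CZ : Submodule (ZMod 2) (Fin n → ZMod 2)) (r : ℕ)
    (hr : finrank (ZMod 2) ↥CZ = r)
    (h1 : ∀ v : Fin n → ZMod 2, hammingWt v ≤ 2 →
      (∀ c ∈ CZ, bform v c = 0) → v ∈ CX) :
    ∃ (s : Fin n → (Fin r → ZMod 2)) (S : Finset (Fin r → ZMod 2)),
      0 ∉ S ∧
      (∀ σ ∈ S, ∃ i, s i = σ) ∧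
      n ≤ finrank (ZMod 2) ↥CX + S.card ∧
      (∀ u ∈ CZ, ∃ lam : Fin r → ZMod 2, ∀ i, u i = ∑ k, lam k * s i k) ∧
      (finrank (ZMod 2) ↥CX + S.card ≤ n →
        ∀ σ ∈ S, ∀ c ∈ CX, ∑ i ∈ Finset.univ.filter (fun i => s i = σ), c i = 0) := by
  classical
  have hchar2 : ∀ y : ZMod 2, y + y = 0 := by decide
  let b : Basis (Fin r) (ZMod 2) ↥CZ := Module.finBasisOfFinrankEq _ _ hr
  set s : Fin n → (Fin r → ZMod 2) := fun i k => (b k : Fin n → ZMod 2) i with hsdef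
  have horthCZ : ∀ v : Fin n → ZMod 2, (∀ k, bform v (b k) = 0) → ∀ c ∈ CZ, bform v c = 0 := by
    intro v hv c hc
    have hrepr : (⟨c, hc⟩ : CZ) = ∑ k, b.repr ⟨c, hc⟩ k • b k := (b.sum_repr ⟨c, hc⟩).symm
    have hc2 : c = ∑ k, b.repr ⟨c, hc⟩ k • (b k : Fin n → ZMod 2) := by
      have h := congrArg (Subtype.val) hrepr
      rw [Submodule.coe_sum] at h
      simpa only [Submodule.coe_smul] using h
    rw [hc2, bform_sum_right]
    simp only [bform_smul_right, hv, mul_zero, Finset.sum_const_zero]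
  have hmem : ∀ v : Fin n → ZMod 2, hammingWt v ≤ 2 → (∀ k, bform v (b k) = 0) → v ∈ CX :=
    fun v h hk => h1 v h (horthCZ v hk)
  have hsingle : ∀ i : Fin n, s i = 0 → (Pi.single i 1 : Fin n → ZMod 2) ∈ CX := by
    intro i hi
    refine hmem _ (hammingWt_le_two _ i i ?_) ?_
    · intro k hk
      rw [Pi.single_apply] at hk
      by_cases h : k = i
      · exact Or.inl h
      · simp [h] at hk
    · intro k
      rw [bform_single_left]
      exact congrFun hi k
  have hpair : ∀ i j : Fin n, s i = s j →
      ((Pi.single i 1 : Fin n → ZMod 2) + Pi.single j 1) ∈ CX := by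
    intro i j hij
    refine hmem _ (hammingWt_le_two _ i j ?_) ?_
    · intro k hk
      by_cases h1 : k = i
      · exact Or.inl h1
      by_cases h2 : k = j
      · exact Or.inr h2
      exfalso
      apply hk
      simp [Pi.single_apply, h1, h2]
    · intro k
      rw [bform_add_left, bform_single_left, bform_single_left]
      have h := congrFun hij k
      have h1 : (b k : Fin n → ZMod 2) i = (b k : Fin n → ZMod 2) j := h
      rw [h1]
      exact hchar2 _
  set S : Finset (Fin r → ZMod 2) := (Finset.univ.image s).erase 0 with hSdef
  set φ : (Fin n → ZMod 2) →ₗ[ZMod 2] (↥S → ZMod 2) :=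
    LinearMap.pi fun σ => ∑ i ∈ Finset.univ.filter (fun i => s i = (σ : Fin r → ZMod 2)), LinearMap.proj i
    with hφdef
  have hφ : ∀ (v : Fin n → ZMod 2) (σ : ↥S),
      φ v σ = ∑ i ∈ Finset.univ.filter (fun i => s i = (σ : Fin r → ZMod 2)), v i := by
    intro v σ
    rw [hφdef]
    simp [LinearMap.pi_apply, LinearMap.sum_apply, LinearMap.proj_apply]
  have hmin' : ∀ (A B : Finset (Fin n)) (hA : A.Nonempty) (hB : B.Nonempty),
      A = B → A.min' hA = B.min' hB := by
    rintro A B hA hB rfl; rfl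
  have hker : LinearMap.ker φ ≤ CX := by
    intro v hv
    rw [LinearMap.mem_ker] at hv
    have hne : ∀ i : Fin n, (Finset.univ.filter fun j => s j = s i).Nonempty :=
      fun i => ⟨i, by simp⟩
    set g : Fin n → Fin n := fun i => (Finset.univ.filter fun j => s j = s i).min' (hne i) with hgdef
    have hg_mem : ∀ i, g i ∈ Finset.univ.filter (fun j => s j = s i) :=
      fun i => Finset.min'_mem _ _
    have hgs : ∀ i, s (g i) = s i := fun i => (Finset.mem_filter.mp (hg_mem i)).2
    have hgg : ∀ i j, s i = s j → g i = g j := by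
      intro i j h
      rw [hgdef]
      exact hmin' _ _ _ _ (by rw [h])
    have hsum2 : (∑ i, v i • (Pi.single (g i) 1 : Fin n → ZMod 2)) ∈ CX := by
      rw [← Finset.sum_fiberwise Finset.univ g (fun i => v i • (Pi.single (g i) 1 : Fin n → ZMod 2))]
      refine Submodule.sum_mem _ ?_
      intro j _
      have hfib : ∑ i ∈ Finset.univ.filter (fun i => g i = j), v i • (Pi.single (g i) 1 : Fin n → ZMod 2)
          = (∑ i ∈ Finset.univ.filter (fun i => g i = j), v i) • (Pi.single j 1 : Fin n → ZMod 2) := by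
        rw [Finset.sum_smul]
        refine Finset.sum_congr rfl ?_
        intro i hi
        rw [(Finset.mem_filter.mp hi).2]
      rw [hfib]
      by_cases hj : s j = 0
      · exact Submodule.smul_mem _ _ (hsingle j hj)
      by_cases hgj : g j = j
      · have hset : Finset.univ.filter (fun i => g i = j) = Finset.univ.filter (fun i => s i = s j) := by
          ext i
          simp only [Finset.mem_filter, Finset.mem_univ, true_and]
          constructor
          · intro h; rw [← h]; exact (hgs i).symm ▸ (hgs i)
          · intro h; rw [hgg i j h, hgj]
        have hSj : s j ∈ S := by
          rw [hSdef]
          exact Finset.mem_erase.mpr ⟨hj, Finset.mem_image.mpr ⟨j, Finset.mem_univ j, rfl⟩⟩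
        have h0 : (∑ i ∈ Finset.univ.filter (fun i => g i = j), v i) = 0 := by
          rw [hset]
          have h2 := congrFun hv (⟨s j, hSj⟩ : ↥S)
          rw [hφ v ⟨s j, hSj⟩] at h2
          simpa using h2
        rw [h0, zero_smul]
        exact Submodule.zero_mem _
      · have hempty : Finset.univ.filter (fun i => g i = j) = ∅ := by
          rw [Finset.filter_eq_empty_iff]
          intro i _
          intro h
          apply hgj
          have hsij : s j = s i := by rw [← h]; exact hgs i
          rw [hgg j i hsij, h]
        rw [hempty, Finset.sum_empty, zero_smul]
        exact Submodule.zero_mem _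
    have hdecomp : v = (∑ i, v i • ((Pi.single i 1 : Fin n → ZMod 2) + Pi.single (g i) 1))
        + ∑ i, v i • (Pi.single (g i) 1 : Fin n → ZMod 2) := by
      rw [← Finset.sum_add_distrib]
      have hstep : ∀ i ∈ Finset.univ,
          v i • ((Pi.single i 1 : Fin n → ZMod 2) + Pi.single (g i) 1)
            + v i • (Pi.single (g i) 1 : Fin n → ZMod 2)
          = v i • (fun j => if i = j then 1 else 0 : Fin n → ZMod 2) := by
        intro i _
        rw [← smul_add, add_assoc]
        have : (Pi.single (g i) 1 : Fin n → ZMod 2) + Pi.single (g i) 1 = 0 := by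
          funext j; exact hchar2 _
        rw [this, add_zero, single_eq]
      rw [Finset.sum_congr rfl hstep]
      exact pi_eq_sum_univ v
    rw [hdecomp]
    exact Submodule.add_mem _
      (Submodule.sum_mem _ fun i _ => Submodule.smul_mem _ _ (hpair i (g i) (hgs i).symm))
      hsum2
  have hkerX : finrank (ZMod 2) ↥(LinearMap.ker φ) ≤ finrank (ZMod 2) ↥CX :=
    Submodule.finrank_mono hker
  have hrn := LinearMap.finrank_range_add_finrank_ker φ
  rw [finrank_fintype_fun_eq_card, Fintype.card_fin] at hrn
  have hrange : finrank (ZMod 2) ↥(LinearMap.range φ) ≤ S.card := by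
    have h2 := Submodule.finrank_le (LinearMap.range φ)
    rwa [finrank_fintype_fun_eq_card, Fintype.card_coe] at h2
  refine ⟨s, S, ?_, ?_, ?_, ?_, ?_⟩
  · rw [hSdef]; exact Finset.notMem_erase _ _
  · intro σ hσ
    rw [hSdef, Finset.mem_erase] at hσ
    obtain ⟨i, -, rfl⟩ := Finset.mem_image.mp hσ.2
    exact ⟨i, rfl⟩
  · omega
  · intro u hu
    refine ⟨fun k => b.repr ⟨u, hu⟩ k, ?_⟩
    intro i
    have hrepr := b.sum_repr ⟨u, hu⟩
    have h := congrArg (fun x : ↥CZ => (x : Fin n → ZMod 2) i) hrepr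
    rw [Submodule.coe_sum, Finset.sum_apply] at h
    refine h.symm.trans ?_
    refine Finset.sum_congr rfl fun k _ => ?_
    simp only [Submodule.coe_smul, Pi.smul_apply, smul_eq_mul]
    rfl
  · intro hle σ hσ c hc
    have hkereq : LinearMap.ker φ = CX :=
      Submodule.eq_of_le_of_finrank_le hker (by omega)
    have hc0 : φ c = 0 := by
      rw [← LinearMap.mem_ker, hkereq]; exact hc
    have h2 := congrFun hc0 (⟨σ, hσ⟩ : ↥S)
    rw [hφ c ⟨σ, hσ⟩] at h2
    simpa using h2

lemma crude {n : ℕ} (CX CZ : Submodule (ZMod 2) (Fin n → ZMod 2))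
    (h1 : ∀ v : Fin n → ZMod 2, hammingWt v ≤ 2 →
      (∀ c ∈ CZ, bform v c = 0) → v ∈ CX) :
    n + 1 ≤ finrank (ZMod 2) ↥CX + 2 ^ finrank (ZMod 2) ↥CZ := by
  classical
  obtain ⟨s, S, hS0, -, hle, -, -⟩ := core CX CZ _ rfl h1
  have hsub : S ⊆ Finset.univ.erase 0 := fun τ hτ =>
    Finset.mem_erase.mpr ⟨ne_of_mem_of_not_mem hτ hS0, Finset.mem_univ τ⟩
  have hcard : S.card ≤ Fintype.card (Fin (finrank (ZMod 2) ↥CZ) → ZMod 2) - 1 := by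
    have h := Finset.card_le_card hsub
    rwa [Finset.card_erase_of_mem (Finset.mem_univ _), Finset.card_univ] at h
  have hc : Fintype.card (Fin (finrank (ZMod 2) ↥CZ) → ZMod 2) = 2 ^ finrank (ZMod 2) ↥CZ := by
    rw [Fintype.card_fun, ZMod.card, Fintype.card_fin]
  have hpos : 1 ≤ 2 ^ finrank (ZMod 2) ↥CZ := Nat.one_le_two_pow
  omega

lemma endgame {n : ℕ} (CX CZ : Submodule (ZMod 2) (Fin n → ZMod 2))
    (h1 : ∀ v : Fin n → ZMod 2, hammingWt v ≤ 2 → (∀ c ∈ CZ, bform v c = 0) → v ∈ CX)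
    (h2 : ∀ v : Fin n → ZMod 2, hammingWt v ≤ 2 → (∀ c ∈ CX, bform v c = 0) → v ∈ CZ)
    (hrZ : finrank (ZMod 2) ↥CZ = 2)
    (hrX : finrank (ZMod 2) ↥CX + 3 ≤ n) : 9 ≤ n := by
  classical
  obtain ⟨s, S, hS0, hwit, hle, hlam, hortho⟩ := core CX CZ 2 hrZ h1
  have hsub : S ⊆ Finset.univ.erase 0 := fun τ hτ =>
    Finset.mem_erase.mpr ⟨ne_of_mem_of_not_mem hτ hS0, Finset.mem_univ τ⟩
  have hcu : (Finset.univ.erase (0 : Fin 2 → ZMod 2)).card = 3 := by decide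
  have hcard3 : S.card ≤ 3 := by
    have h := Finset.card_le_card hsub
    omega
  have hcardS : S.card = 3 := by omega
  have hSeq : S = Finset.univ.erase 0 :=
    Finset.eq_of_subset_of_card_le hsub (by omega)
  have hor := hortho (by omega)
  have hclass : ∀ σ ∈ S, 3 ≤ (Finset.univ.filter (fun i => s i = σ)).card := by
    intro σ hσ
    by_contra hlt
    push_neg at hlt
    set u : Fin n → ZMod 2 := fun i => if s i = σ then 1 else 0 with hudef
    have hwt : hammingWt u ≤ 2 := by
      have hfe : (Finset.univ.filter fun i => u i ≠ 0) = Finset.univ.filter (fun i => s i = σ) := by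
        ext i
        simp only [Finset.mem_filter, Finset.mem_univ, true_and, hudef]
        constructor
        · intro h; by_contra h'; simp [h'] at h
        · intro h; simp [h]
      rw [hammingWt, hfe]; omega
    have huZ : u ∈ CZ := by
      apply h2 u hwt
      intro c hc
      have hb : bform u c = ∑ i ∈ Finset.univ.filter (fun i => s i = σ), c i := by
        rw [bform, Finset.sum_filter]
        refine Finset.sum_congr rfl ?_
        intro i _
        rw [hudef]
        by_cases h : s i = σ <;> simp [h]
      rw [hb]
      exact hor σ hσ c hc
    obtain ⟨lam, hlamu⟩ := hlam u huZ
    have key : ∀ τ ∈ S, (∑ k, lam k * τ k) = if τ = σ then (1 : ZMod 2) else 0 := by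
      intro τ hτ
      obtain ⟨i, rfl⟩ := hwit τ hτ
      rw [← hlamu i]
    have hsum : ∑ τ ∈ S, (∑ k, lam k * τ k) = 1 := by
      rw [Finset.sum_congr rfl key, Finset.sum_ite_eq' S σ (fun _ => 1), if_pos hσ]
    have hzero : ∑ τ ∈ S, (∑ k, lam k * τ k) = 0 := by
      rw [Finset.sum_comm]
      have hS0sum : ∑ τ ∈ S, τ = 0 := by rw [hSeq]; decide
      have hk0 : ∀ k ∈ Finset.univ, ∑ τ ∈ S, lam k * τ k = 0 := by
        intro k _
        rw [← Finset.mul_sum]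
        have hτk : ∑ τ ∈ S, τ k = 0 := by
          have h := congrFun hS0sum k
          simpa [Finset.sum_apply] using h
        rw [hτk, mul_zero]
      rw [Finset.sum_congr rfl hk0, Finset.sum_const_zero]
    rw [hsum] at hzero
    exact one_ne_zero hzero
  have hdisj : ∀ σ ∈ S, ∀ τ ∈ S, σ ≠ τ →
      Disjoint (Finset.univ.filter (fun i => s i = σ)) (Finset.univ.filter (fun i => s i = τ)) := by
    intro σ _ τ _ hst
    rw [Finset.disjoint_left]
    intro i hi hi2
    exact hst ((Finset.mem_filter.mp hi).2.symm.trans (Finset.mem_filter.mp hi2).2)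
  have hbU := Finset.card_biUnion hdisj
  have hle2 : (S.biUnion fun σ => Finset.univ.filter (fun i => s i = σ)).card ≤ n := by
    have h := Finset.card_le_card
      (Finset.subset_univ (S.biUnion fun σ => Finset.univ.filter (fun i => s i = σ)))
    rwa [Finset.card_univ, Fintype.card_fin] at h
  have hsum9 : S.card * 3 ≤ ∑ σ ∈ S, (Finset.univ.filter (fun i => s i = σ)).card := by
    have := Finset.card_nsmul_le_sum S (fun σ => (Finset.univ.filter (fun i => s i = σ)).card) 3 hclass
    simpa [smul_eq_mul] using this
  omega

/-- The Steane code is the smallest single-error-correcting CSS code: for every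
`n ≤ 6` there is no CSS code on `n` qubits encoding at least one logical qubit
(i.e. `dim C_X + dim C_Z ≤ n - 1`) that corrects an arbitrary single-qubit error. -/
theorem steane_smallest_CSS (n : ℕ) (hn : n ≤ 6) :
    ¬ ∃ (CX CZ : Submodule (ZMod 2) (Fin n → ZMod 2)),
      (∀ a ∈ CX, ∀ b ∈ CZ, bform a b = 0) ∧
      Module.finrank (ZMod 2) CX + Module.finrank (ZMod 2) CZ + 1 ≤ n ∧
      (∀ v : Fin n → ZMod 2, hammingWt v ≤ 2 →
        (∀ c ∈ CZ, bform v c = 0) → v ∈ CX) ∧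
      (∀ v : Fin n → ZMod 2, hammingWt v ≤ 2 →
        (∀ c ∈ CX, bform v c = 0) → v ∈ CZ) := by
  rintro ⟨CX, CZ, -, hdim, h1, h2⟩
  have c1 := crude CX CZ h1
  have c2 := crude CZ CX h2
  set a := finrank (ZMod 2) ↥CX with ha
  set b := finrank (ZMod 2) ↥CZ with hb
  clear_value a b
  have ha5 : a ≤ 5 := by omega
  have hb5 : b ≤ 5 := by omega
  have hcase : (b = 2 ∧ a + 3 ≤ n) ∨ (a = 2 ∧ b + 3 ≤ n) := by
    interval_cases a <;> interval_cases b <;> omega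
  rcases hcase with ⟨hb2, hax⟩ | ⟨ha2, hbx⟩
  · have h9 := endgame CX CZ h1 h2 (by omega) (by omega)
    omega
  · have h9 := endgame CZ CX h2 h1 (by omega) (by omega)
    omega
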